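/- When the LLL algorithm swaps b_{k-1} and b_k (upon failure of the Lovász test ‖b̂_k + μ_{k,k-1} b̂_{k-1}‖² < δ‖b̂_{k-1}‖²), the new (k-1)-th Gram-Schmidt vector equals b̂_k + μ_{k,k-1} b̂_{k-1}, and hence its squared norm is strictly smaller than δ times the old ‖b̂_{k-1}‖². -/

import Mathlib

/-- Gram-Schmidt orthogonalization of a family of vectors in ℂⁿ. -/
noncomputable def gso {n : ℕ} (b : Fin n → EuclideanSpace ℂ (Fin n)) :
    Fin n → EuclideanSpace ℂ (Fin n) :=
  @InnerProductSpace.gramSchmidt ℂ _ _ _ _ (Fin n) _ _ (inferInstance : WellFoundedLT (Fin n)) b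

/-- Gram-Schmidt coefficient μ_{i,j} = ⟨bᵢ, b̂ⱼ⟩ / ‖b̂ⱼ‖². -/
noncomputable def mu {n : ℕ} (b : Fin n → EuclideanSpace ℂ (Fin n)) (i j : Fin n) : ℂ :=
  (inner ℂ (gso b j) (b i) : ℂ) / ((‖gso b j‖ ^ 2 : ℝ) : ℂ)

lemma gso_def {n : ℕ} (f : Fin n → EuclideanSpace ℂ (Fin n)) (c : Fin n) :
    gso f c = f c - ∑ k ∈ Finset.Iio c,
      ((ℂ ∙ gso f k).starProjection (f c) : EuclideanSpace ℂ (Fin n)) :=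
  InnerProductSpace.gramSchmidt_def ℂ f c

lemma gso_congr {n : ℕ} (f g : Fin n → EuclideanSpace ℂ (Fin n)) :
    ∀ c : Fin n, (∀ k ≤ c, f k = g k) → gso f c = gso g c := by
  intro c
  induction c using WellFoundedLT.induction with
  | _ c ih =>
    intro h
    rw [gso_def f c, gso_def g c, h c le_rfl]
    congr 1
    refine Finset.sum_congr rfl fun k hk => ?_
    have hkc : k < c := Finset.mem_Iio.mp hk
    rw [ih k hkc (fun m hm => h m (le_of_lt (lt_of_le_of_lt hm hkc)))]

theorem stmt7 (n : ℕ) (δ : ℝ) (b : Fin n → EuclideanSpace ℂ (Fin n))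
    (hb : LinearIndependent ℂ b)
    (j i : Fin n) (hij : j.val + 1 = i.val)
    (hfail : ‖gso b i + mu b i j • gso b j‖^2 < δ * ‖gso b j‖^2) :
    gso (b ∘ Equiv.swap j i) j = gso b i + mu b i j • gso b j ∧
    ‖gso (b ∘ Equiv.swap j i) j‖^2 < δ * ‖gso b j‖^2 := by
  have hji : j < i := by
    rw [Fin.lt_def]; omega
  have hswap : ∀ k : Fin n, k < j → (b ∘ Equiv.swap j i) k = b k := by
    intro k hk
    simp only [Function.comp_apply]
    rw [Equiv.swap_apply_of_ne_of_ne (ne_of_lt hk) (ne_of_lt (lt_trans hk hji))]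
  have hgk : ∀ k : Fin n, k < j → gso (b ∘ Equiv.swap j i) k = gso b k := by
    intro k hk
    exact gso_congr _ _ k (fun m hm => hswap m (lt_of_le_of_lt hm hk))
  have hbj : (b ∘ Equiv.swap j i) j = b i := by
    simp [Function.comp_apply]
  have hIio : Finset.Iio i = insert j (Finset.Iio j) := by
    ext k
    simp only [Finset.mem_Iio, Finset.mem_insert, Fin.lt_def, Fin.ext_iff]
    omega
  have hmain : gso (b ∘ Equiv.swap j i) j = gso b i + mu b i j • gso b j := by
    rw [gso_def (b ∘ Equiv.swap j i) j, hbj]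
    have h1 : ∑ k ∈ Finset.Iio j,
        ((ℂ ∙ gso (b ∘ Equiv.swap j i) k).starProjection (b i)
          : EuclideanSpace ℂ (Fin n)) =
        ∑ k ∈ Finset.Iio j,
        ((ℂ ∙ gso b k).starProjection (b i) : EuclideanSpace ℂ (Fin n)) := by
      refine Finset.sum_congr rfl fun k hk => ?_
      rw [show gso (b ∘ Equiv.swap j i) k = gso b k from
        hgk k (Finset.mem_Iio.mp hk)]
    rw [h1]
    have h2 : gso b i = b i - ∑ k ∈ Finset.Iio i,
        ((ℂ ∙ gso b k).starProjection (b i) : EuclideanSpace ℂ (Fin n)) :=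
      gso_def b i
    rw [h2, hIio, Finset.sum_insert (by simp)]
    have h3 : ((ℂ ∙ gso b j).starProjection (b i) : EuclideanSpace ℂ (Fin n))
        = mu b i j • gso b j := by
      rw [Submodule.starProjection_singleton]
      rfl
    rw [h3]
    abel
  exact ⟨hmain, by rw [hmain]; exact hfail⟩
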